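/- Let E be a Dedekind complete Riesz space with weak order unit and T a strictly positive conditional expectation operator on E = L^1(T). For all f, g in L^2(T), the Hölder-type inequality T|fg| ≤ ‖f‖_{T,2} ‖g‖_{T,2} holds, where ‖f‖_{T,2} = (T(f^2))^{1/2} computed in the f-algebra structure of the universal completion. -/

import Mathlib

/-!
Common setup.  `E` models the universal completion `E_u` of the `T`-universally
complete Riesz space `L¹(T)`: a Dedekind complete (conditionally complete)
`f`-algebra whose multiplicative unit `1 = e = Te` is a weak order unit.
`T : E → E` models the strictly positive conditional expectation operator,
`L1 ⊆ E` its natural domain `L¹(T)`, `L2 L1` the space `L²(T)` and `RT T` the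
range `R(T)` of `T`.
-/

variable {E : Type*}

/-- The range `R(T)` of the conditional expectation operator. -/
def RT (T : E → E) : Set E := Set.range T

/-- `L²(T) = {f ∈ L¹(T) : f² ∈ L¹(T)}`, the product taken in the `f`-algebra `E_u`. -/
def L2 [Mul E] (L1 : Set E) : Set E := {f | f ∈ L1 ∧ f * f ∈ L1}

variable [CommRing E] [ConditionallyCompleteLattice E]

/-- `T` is a strictly positive conditional expectation operator on the
`T`-universally complete space `L¹(T)` (modelled by the set `L1` inside the
Dedekind complete `f`-algebra `E`), with `1 = e = Te` a weak order unit. -/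
structure IsCondExp (T : E → E) (L1 : Set E) : Prop where
  /-- compatibility of the order with addition -/
  addLe : ∀ a b c : E, a ≤ b → a + c ≤ b + c
  /-- products of positive elements are positive -/
  mulPos : ∀ a b : E, 0 ≤ a → 0 ≤ b → 0 ≤ a * b
  /-- the `f`-algebra property -/
  fAlg : ∀ a b c : E, a ⊓ b = 0 → 0 ≤ c → (c * a) ⊓ b = 0
  /-- `1 = e` is a weak order unit -/
  weakUnit : ∀ x : E, 0 ≤ x → x ⊓ 1 = 0 → x = 0
  /-- `T` is additive -/
  addT : ∀ a b : E, T (a + b) = T a + T b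
  /-- `T` is positive -/
  posT : ∀ a : E, 0 ≤ a → 0 ≤ T a
  /-- `T` is strictly positive -/
  strictT : ∀ a : E, 0 ≤ a → T a = 0 → a = 0
  /-- `T` is a projection -/
  projT : ∀ a : E, T (T a) = T a
  /-- `T` maps the weak order unit `e = 1` to itself -/
  unitT : T 1 = 1
  /-- `T` is an averaging operator: `T(T a · b) = T a · T b` -/
  avgT : ∀ a b : E, T (T a * b) = T a * T b
  /-- `T` is order continuous -/
  ordContT : ∀ S : Set E, S.Nonempty → DirectedOn (· ≥ ·) S → (∀ x ∈ S, 0 ≤ x) →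
      IsGLB S 0 → IsGLB (T '' S) 0
  /-- `L¹(T)` is closed under addition -/
  l1add : ∀ a ∈ L1, ∀ b ∈ L1, a + b ∈ L1
  /-- `L¹(T)` is solid -/
  l1sol : ∀ a ∈ L1, ∀ b : E, |b| ≤ |a| → b ∈ L1
  /-- `R(T) ⊆ L¹(T)` and `T` maps `L¹(T)` into itself -/
  rtL1 : ∀ a : E, T a ∈ L1
  /-- `L²(T)` is an `R(T)`-module -/
  l2mod : ∀ α ∈ RT T, ∀ x ∈ L2 L1, α * x ∈ L2 L1
  /-- `T`-universal completeness of `L¹(T)` -/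
  tuc : ∀ S : Set E, S.Nonempty → (∀ x ∈ S, 0 ≤ x ∧ x ∈ L1) → DirectedOn (· ≤ ·) S →
      BddAbove (T '' S) → BddAbove S ∧ sSup S ∈ L1

/-- `sqrt` is a square-root function on the positive cone of the `f`-algebra. -/
def IsSqrt (sqrt : E → E) : Prop := ∀ a : E, 0 ≤ a → 0 ≤ sqrt a ∧ sqrt a * sqrt a = a

/-- The `R(T)`-valued norm `‖f‖_{T,2} = (T (f²))^{1/2}` on `L²(T)`. -/
def nrm (T : E → E) (sqrt : E → E) (f : E) : E := sqrt (T (f * f))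

/-- A `T`-linear functional on `E = L²(T)`: `R(T)`-valued, additive,
`R(T)`-homogeneous and order bounded.  The set of these is the `T`-dual `E*`. -/
def TLinear (T : E → E) (L1 : Set E) (F : E → E) : Prop :=
  (∀ x ∈ L2 L1, F x ∈ RT T) ∧
  (∀ x ∈ L2 L1, ∀ y ∈ L2 L1, F (x + y) = F x + F y) ∧
  (∀ α ∈ RT T, ∀ x ∈ L2 L1, F (α * x) = α * F x) ∧
  (∀ x ∈ L2 L1, 0 ≤ x → ∃ b : E, ∀ y ∈ L2 L1, |y| ≤ x → |F y| ≤ b)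

/-- `T`-strong boundedness: `|F x| ≤ k ‖x‖_{T,2}` for some `k ∈ R(T)₊`. -/
def StronglyBdd (T : E → E) (L1 : Set E) (sqrt : E → E) (F : E → E) : Prop :=
  ∃ k ∈ RT T, 0 ≤ k ∧ ∀ x ∈ L2 L1, |F x| ≤ k * nrm T sqrt x

/-- Membership in the `T`-strong dual `Ê` of `L²(T)`. -/
def MemEhat (T : E → E) (L1 : Set E) (sqrt : E → E) (F : E → E) : Prop :=
  TLinear T L1 F ∧ StronglyBdd T L1 sqrt F

/-- The Riesz representation map `Ψ(f)(g) = T (f g)`. -/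
def Psi (T : E → E) (f : E) : E → E := fun g => T (f * g)

/-- The Riesz–Kantorovich set `{F y + G z : y, z ∈ L²(T)₊, y + z = x}` whose
supremum is `(F ∨ G)(x)` and whose infimum is `(F ∧ G)(x)`. -/
def RKset (L1 : Set E) (F G : E → E) (x : E) : Set E :=
  {v | ∃ y z : E, y ∈ L2 L1 ∧ z ∈ L2 L1 ∧ 0 ≤ y ∧ 0 ≤ z ∧ y + z = x ∧ v = F y + G z}

/-- The partial order on functionals: `F ≤ G` iff `F x ≤ G x` for all `x ∈ L²(T)₊`. -/
def leF [Mul E] (L1 : Set E) (F G : E → E) : Prop := ∀ x ∈ L2 L1, 0 ≤ x → F x ≤ G x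

section CSAux

variable {E' : Type*} [CommRing E'] [ConditionallyCompleteLattice E']
variable {T' : E' → E'} {L1' : Set E'}

private lemma csALM (hadd : ∀ a b c : E', a ≤ b → a + c ≤ b + c) : AddLeftMono E' :=
  ⟨fun m _ _ h => by simpa [add_comm] using hadd _ _ m h⟩

private lemma csARM (hadd : ∀ a b c : E', a ≤ b → a + c ≤ b + c) : AddRightMono E' :=
  ⟨fun m _ _ h => hadd _ _ m h⟩

/-- multiplication by a nonnegative element is monotone -/
private lemma cs_mul_le (hT : IsCondExp T' L1') {a b c : E'} (hc : 0 ≤ c) (hab : a ≤ b) :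
    c * a ≤ c * b := by
  haveI := csALM hT.addLe; haveI := csARM hT.addLe
  have h := hT.mulPos c (b - a) hc (sub_nonneg.2 hab)
  rw [mul_sub] at h
  exact sub_nonneg.1 h

/-- disjoint positive elements have zero product -/
private lemma cs_disj (hT : IsCondExp T' L1') {x y : E'} (hx : 0 ≤ x) (hy : 0 ≤ y)
    (h : x ⊓ y = 0) : x * y = 0 := by
  have h1 : (y * x) ⊓ y = 0 := hT.fAlg x y y h hy
  have h2 : (x * y) ⊓ (y * x) = 0 := hT.fAlg y (y * x) x (by rwa [inf_comm] at h1) hx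
  rw [mul_comm y x] at h2
  rwa [inf_idem] at h2

private lemma cs_pn (hT : IsCondExp T' L1') (x : E') : x⁺ * x⁻ = 0 := by
  haveI := csALM hT.addLe; haveI := csARM hT.addLe
  exact cs_disj hT (posPart_nonneg x) (negPart_nonneg x) (posPart_inf_negPart_eq_zero x)

/-- squares are nonnegative -/
private lemma cs_sq (hT : IsCondExp T' L1') (x : E') : 0 ≤ x * x := by
  haveI := csALM hT.addLe; haveI := csARM hT.addLe
  have h1 := posPart_sub_negPart x
  have h2 := cs_pn hT x
  have h3 := hT.mulPos _ _ (posPart_nonneg x) (posPart_nonneg x)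
  have h4 := hT.mulPos _ _ (negPart_nonneg x) (negPart_nonneg x)
  have h5 : x * x = x⁺ * x⁺ + x⁻ * x⁻ - 2 * (x⁺ * x⁻) := by
    have h : (x⁺ - x⁻) * (x⁺ - x⁻) = x⁺ * x⁺ + x⁻ * x⁻ - 2 * (x⁺ * x⁻) := by ring
    rwa [h1] at h
  rw [h5, h2]
  simpa using add_nonneg h3 h4

private lemma cs_inf_add (hT : IsCondExp T' L1') {a b c : E'} (ha : 0 ≤ a) (hb : 0 ≤ b)
    (hc : 0 ≤ c) (h1 : a ⊓ c = 0) (h2 : b ⊓ c = 0) : (a + b) ⊓ c = 0 := by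
  haveI := csALM hT.addLe; haveI := csARM hT.addLe
  refine le_antisymm ?_ (le_inf (add_nonneg ha hb) hc)
  have key : (a ⊓ c) + (b ⊓ c) = ((a + b) ⊓ (a + c)) ⊓ ((c + b) ⊓ (c + c)) := by
    rw [inf_add, add_inf, add_inf]
  have hle : (a + b) ⊓ c ≤ (a ⊓ c) + (b ⊓ c) := by
    rw [key]
    refine le_inf (le_inf inf_le_left ?_) (le_inf ?_ ?_)
    · exact le_trans inf_le_right (le_add_of_nonneg_left ha)
    · exact le_trans inf_le_right (le_add_of_nonneg_right hb)
    · exact le_trans inf_le_right (le_add_of_nonneg_left hc)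
  rw [h1, h2, add_zero] at hle
  exact hle

/-- |fg| = |f||g| -/
private lemma cs_abs_mul (hT : IsCondExp T' L1') (f g : E') : |f * g| = |f| * |g| := by
  haveI := csALM hT.addLe; haveI := csARM hT.addLe
  have hkey : ∀ x y u v : E', 0 ≤ x → 0 ≤ u → y ⊓ v = 0 → (x * y) ⊓ (u * v) = 0 := by
    intro x y u v hx hu hyv
    have h1 : (x * y) ⊓ v = 0 := hT.fAlg y v x hyv hx
    have h2 : (u * v) ⊓ (x * y) = 0 := hT.fAlg v (x * y) u (by rwa [inf_comm] at h1) hu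
    rwa [inf_comm] at h2
  have hfp := posPart_nonneg f; have hfm := negPart_nonneg f
  have hgp := posPart_nonneg g; have hgm := negPart_nonneg g
  have hfpm : f⁺ ⊓ f⁻ = 0 := posPart_inf_negPart_eq_zero f
  have hgpm : g⁺ ⊓ g⁻ = 0 := posPart_inf_negPart_eq_zero g
  have hfmp : f⁻ ⊓ f⁺ = 0 := by rwa [inf_comm] at hfpm
  have hgmp : g⁻ ⊓ g⁺ = 0 := by rwa [inf_comm] at hgpm
  have d11 : (f⁺ * g⁺) ⊓ (f⁺ * g⁻) = 0 := hkey f⁺ g⁺ f⁺ g⁻ hfp hfp hgpm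
  have d22 : (f⁻ * g⁻) ⊓ (f⁻ * g⁺) = 0 := hkey f⁻ g⁻ f⁻ g⁺ hfm hfm hgmp
  have d12 : (f⁺ * g⁺) ⊓ (f⁻ * g⁺) = 0 := by
    have h := hkey g⁺ f⁺ g⁺ f⁻ hgp hgp hfpm
    rwa [mul_comm g⁺ f⁺, mul_comm g⁺ f⁻] at h
  have d21 : (f⁻ * g⁻) ⊓ (f⁺ * g⁻) = 0 := by
    have h := hkey g⁻ f⁻ g⁻ f⁺ hgm hgm hfmp
    rwa [mul_comm g⁻ f⁻, mul_comm g⁻ f⁺] at h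
  have m11 := hT.mulPos _ _ hfp hgp
  have m12 := hT.mulPos _ _ hfp hgm
  have m21 := hT.mulPos _ _ hfm hgp
  have m22 := hT.mulPos _ _ hfm hgm
  have hPn1 : (f⁺ * g⁺ + f⁻ * g⁻) ⊓ (f⁺ * g⁻) = 0 := cs_inf_add hT m11 m22 m12 d11 d21
  have hPn2 : (f⁺ * g⁺ + f⁻ * g⁻) ⊓ (f⁻ * g⁺) = 0 := cs_inf_add hT m11 m22 m21 d12 d22
  have hNP : (f⁺ * g⁻ + f⁻ * g⁺) ⊓ (f⁺ * g⁺ + f⁻ * g⁻) = 0 :=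
    cs_inf_add hT m12 m21 (add_nonneg m11 m22)
      (by rwa [inf_comm] at hPn1) (by rwa [inf_comm] at hPn2)
  have hPN : (f⁺ * g⁺ + f⁻ * g⁻) ⊓ (f⁺ * g⁻ + f⁻ * g⁺) = 0 := by rwa [inf_comm] at hNP
  have hfg : f * g = (f⁺ * g⁺ + f⁻ * g⁻) - (f⁺ * g⁻ + f⁻ * g⁺) := by
    have h : (f⁺ - f⁻) * (g⁺ - g⁻) = (f⁺ * g⁺ + f⁻ * g⁻) - (f⁺ * g⁻ + f⁻ * g⁺) := by ring
    rwa [posPart_sub_negPart, posPart_sub_negPart] at h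
  have habsfg : |f| * |g| = (f⁺ * g⁺ + f⁻ * g⁻) + (f⁺ * g⁻ + f⁻ * g⁺) := by
    have h : (f⁺ + f⁻) * (g⁺ + g⁻) = (f⁺ * g⁺ + f⁻ * g⁻) + (f⁺ * g⁻ + f⁻ * g⁺) := by ring
    rwa [posPart_add_negPart, posPart_add_negPart] at h
  have hsup : (f⁺ * g⁺ + f⁻ * g⁻) ⊔ (f⁺ * g⁻ + f⁻ * g⁺) =
      (f⁺ * g⁺ + f⁻ * g⁻) + (f⁺ * g⁻ + f⁻ * g⁺) := by
    have h := inf_add_sup (f⁺ * g⁺ + f⁻ * g⁻) (f⁺ * g⁻ + f⁻ * g⁺)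
    rw [hPN, zero_add] at h
    exact h
  have hzp : ((f⁺ * g⁺ + f⁻ * g⁻) - (f⁺ * g⁻ + f⁻ * g⁺))⁺ = f⁺ * g⁺ + f⁻ * g⁻ := by
    rw [posPart_def, ← sub_self (f⁺ * g⁻ + f⁻ * g⁺), ← sup_sub, hsup]
    abel
  have hzm : ((f⁺ * g⁺ + f⁻ * g⁻) - (f⁺ * g⁻ + f⁻ * g⁺))⁻ = f⁺ * g⁻ + f⁻ * g⁺ := by
    rw [negPart_def, neg_sub, ← sub_self (f⁺ * g⁺ + f⁻ * g⁻), ← sup_sub,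
      sup_comm (f⁺ * g⁻ + f⁻ * g⁺) (f⁺ * g⁺ + f⁻ * g⁻), hsup]
    abel
  rw [hfg, habsfg, ← posPart_add_negPart ((f⁺ * g⁺ + f⁻ * g⁻) - (f⁺ * g⁻ + f⁻ * g⁺)), hzp, hzm]

/-- natural number casts are nonnegative -/
private lemma cs_natpos (hT : IsCondExp T' L1') (n : ℕ) : (0 : E') ≤ (n : E') := by
  haveI := csALM hT.addLe; haveI := csARM hT.addLe
  induction n with
  | zero => simp
  | succ k ih =>
      push_cast
      exact add_nonneg ih (by simpa using cs_sq hT 1)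

/-- Archimedean property from conditional completeness -/
private lemma cs_arch (hT : IsCondExp T' L1') {y : E'} (h : ∀ n : ℕ, (n : E') * y ≤ 1) :
    y ≤ 0 := by
  haveI := csALM hT.addLe; haveI := csARM hT.addLe
  have hne : (Set.range (fun n : ℕ => (n : E') * y)).Nonempty := ⟨_, ⟨0, rfl⟩⟩
  have hbdd : BddAbove (Set.range (fun n : ℕ => (n : E') * y)) :=
    ⟨1, by rintro x ⟨n, rfl⟩; exact h n⟩
  have hstep : ∀ x ∈ Set.range (fun n : ℕ => (n : E') * y),
      x ≤ sSup (Set.range (fun n : ℕ => (n : E') * y)) - y := by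
    rintro x ⟨n, rfl⟩
    have h1 : ((n + 1 : ℕ) : E') * y ≤ sSup (Set.range (fun n : ℕ => (n : E') * y)) :=
      le_csSup hbdd ⟨n + 1, rfl⟩
    have h2 : (n : E') * y + y ≤ sSup (Set.range (fun n : ℕ => (n : E') * y)) := by
      have e : ((n + 1 : ℕ) : E') * y = (n : E') * y + y := by push_cast; ring
      rwa [e] at h1
    exact le_sub_iff_add_le.2 h2
  have h3 : sSup (Set.range (fun n : ℕ => (n : E') * y)) ≤
      sSup (Set.range (fun n : ℕ => (n : E') * y)) - y := csSup_le hne hstep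
  have h4 : (0 : E') ≤ -y := by
    have := sub_nonneg.2 h3
    calc (0 : E') ≤ sSup (Set.range (fun n : ℕ => (n : E') * y)) - y -
        sSup (Set.range (fun n : ℕ => (n : E') * y)) := this
      _ = -y := by ring
  simpa using neg_nonneg.1 h4

/-- square-zero positive elements vanish -/
private lemma cs_sqzero (hT : IsCondExp T' L1') {x : E'} (hx : 0 ≤ x) (hxx : x * x = 0) :
    x = 0 := by
  haveI := csALM hT.addLe; haveI := csARM hT.addLe
  have hone : (0 : E') ≤ 1 := by simpa using cs_sq hT 1
  have hy0 : 0 ≤ x ⊓ 1 := le_inf hx hone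
  have hyx : x ⊓ 1 ≤ x := inf_le_left
  have hyy : (x ⊓ 1) * (x ⊓ 1) = 0 := by
    refine le_antisymm ?_ (hT.mulPos _ _ hy0 hy0)
    calc (x ⊓ 1) * (x ⊓ 1) ≤ (x ⊓ 1) * x := cs_mul_le hT hy0 hyx
      _ = x * (x ⊓ 1) := by ring
      _ ≤ x * x := cs_mul_le hT hx hyx
      _ = 0 := hxx
  have hbd : ∀ n : ℕ, (n : E') * (x ⊓ 1) ≤ 1 := by
    intro n
    have hny : 0 ≤ (n : E') * (x ⊓ 1) := hT.mulPos _ _ (cs_natpos hT n) hy0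
    have hple : ((n : E') * (x ⊓ 1) - 1)⁺ ≤ (n : E') * (x ⊓ 1) := by
      calc ((n : E') * (x ⊓ 1) - 1)⁺ ≤ ((n : E') * (x ⊓ 1))⁺ :=
            posPart_mono (sub_le_self _ hone)
        _ = (n : E') * (x ⊓ 1) := posPart_eq_self.2 hny
    have hpy : ((n : E') * (x ⊓ 1) - 1)⁺ * (x ⊓ 1) = 0 := by
      refine le_antisymm ?_ (hT.mulPos _ _ (posPart_nonneg _) hy0)
      calc ((n : E') * (x ⊓ 1) - 1)⁺ * (x ⊓ 1)
          = (x ⊓ 1) * ((n : E') * (x ⊓ 1) - 1)⁺ := by ring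
        _ ≤ (x ⊓ 1) * ((n : E') * (x ⊓ 1)) := cs_mul_le hT hy0 hple
        _ = (n : E') * ((x ⊓ 1) * (x ⊓ 1)) := by ring
        _ = 0 := by rw [hyy]; ring
    have hpq : ((n : E') * (x ⊓ 1) - 1)⁺ * ((n : E') * (x ⊓ 1) - 1)⁻ = 0 := cs_pn hT _
    have hsub : ((n : E') * (x ⊓ 1) - 1)⁺ - ((n : E') * (x ⊓ 1) - 1)⁻
        = (n : E') * (x ⊓ 1) - 1 := posPart_sub_negPart _
    have hpny : ((n : E') * (x ⊓ 1) - 1)⁺ * ((n : E') * (x ⊓ 1)) = 0 := by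
      calc ((n : E') * (x ⊓ 1) - 1)⁺ * ((n : E') * (x ⊓ 1))
          = (n : E') * (((n : E') * (x ⊓ 1) - 1)⁺ * (x ⊓ 1)) := by ring
        _ = 0 := by rw [hpy, mul_zero]
    have hpp : ((n : E') * (x ⊓ 1) - 1)⁺ * ((n : E') * (x ⊓ 1) - 1)⁺
        = -((n : E') * (x ⊓ 1) - 1)⁺ := by
      have e1 : ((n : E') * (x ⊓ 1) - 1)⁺ * (((n : E') * (x ⊓ 1) - 1)⁺
          - ((n : E') * (x ⊓ 1) - 1)⁻)
          = ((n : E') * (x ⊓ 1) - 1)⁺ * ((n : E') * (x ⊓ 1) - 1) := by rw [hsub]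
      rw [mul_sub, hpq, sub_zero, mul_sub, mul_one, hpny] at e1
      rw [e1]; ring
    have hpneg : ((n : E') * (x ⊓ 1) - 1)⁺ ≤ 0 := by
      have h := hT.mulPos _ _ (posPart_nonneg ((n : E') * (x ⊓ 1) - 1))
        (posPart_nonneg ((n : E') * (x ⊓ 1) - 1))
      rw [hpp] at h
      simpa using neg_nonneg.1 h
    have hp0 : ((n : E') * (x ⊓ 1) - 1)⁺ = 0 := le_antisymm hpneg (posPart_nonneg _)
    exact sub_nonpos.1 (posPart_eq_zero.1 hp0)
  have hyneg : x ⊓ 1 ≤ 0 := cs_arch hT hbd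
  exact hT.weakUnit x hx (le_antisymm hyneg hy0)

/-- cube-zero positive elements vanish -/
private lemma cs_cubezero (hT : IsCondExp T' L1') {x : E'} (hx : 0 ≤ x)
    (hxxx : x * x * x = 0) : x = 0 := by
  have hu : 0 ≤ x * x := hT.mulPos _ _ hx hx
  have huu : (x * x) * (x * x) = 0 := by
    calc (x * x) * (x * x) = (x * x * x) * x := by ring
      _ = 0 := by rw [hxxx]; ring
  exact cs_sqzero hT hx (cs_sqzero hT hu huu)

/-- squaring reflects order on the positive cone -/
private lemma cs_sqle (hT : IsCondExp T' L1') {u v : E'} (hu : 0 ≤ u) (hv : 0 ≤ v)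
    (h : u * u ≤ v * v) : u ≤ v := by
  haveI := csALM hT.addLe; haveI := csARM hT.addLe
  have hc0 : 0 ≤ (u - v)⁺ := posPart_nonneg _
  have hcd : (u - v)⁺ * (u - v)⁻ = 0 := cs_pn hT _
  have hcu : (u - v)⁺ ≤ u := by
    calc (u - v)⁺ ≤ u⁺ := posPart_mono (sub_le_self u hv)
      _ = u := posPart_eq_self.2 hu
  have hsub : (u - v)⁺ - (u - v)⁻ = u - v := posPart_sub_negPart _
  have hc2 : (u - v)⁺ * (u - v)⁺ = (u - v)⁺ * (u - v) := by
    have e : (u - v)⁺ * ((u - v)⁺ - (u - v)⁻) = (u - v)⁺ * (u - v) := by rw [hsub]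
    rw [mul_sub, hcd, sub_zero] at e
    exact e
  have hkey : (u - v)⁺ * (u - v)⁺ * (u + v) ≤ 0 := by
    have h1 : 0 ≤ (u - v)⁺ * (v * v - u * u) := hT.mulPos _ _ hc0 (sub_nonneg.2 h)
    have h2 : (u - v)⁺ * (u - v)⁺ * (u + v) = -((u - v)⁺ * (v * v - u * u)) := by
      rw [hc2]; ring
    rw [h2]
    simpa using neg_nonpos.2 h1
  have hlow : (u - v)⁺ * (u - v)⁺ * (u - v)⁺ ≤ (u - v)⁺ * (u - v)⁺ * (u + v) := by
    have h1 : 0 ≤ ((u - v)⁺ * (u - v)⁺) * ((u + v) - (u - v)⁺) := by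
      refine hT.mulPos _ _ (hT.mulPos _ _ hc0 hc0) ?_
      exact sub_nonneg.2 (le_trans hcu (le_add_of_nonneg_right hv))
    rw [mul_sub] at h1
    exact sub_nonneg.1 h1
  have hcc : (u - v)⁺ * (u - v)⁺ * (u - v)⁺ = 0 :=
    le_antisymm (le_trans hlow hkey) (hT.mulPos _ _ (hT.mulPos _ _ hc0 hc0) hc0)
  exact sub_nonpos.1 (posPart_eq_zero.1 (cs_cubezero hT hc0 hcc))

private lemma cs_T0 (hT : IsCondExp T' L1') : T' 0 = 0 := by
  haveI := csALM hT.addLe; haveI := csARM hT.addLe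
  have h := hT.addT 0 0
  rw [add_zero] at h
  calc T' 0 = T' 0 + T' 0 - T' 0 := by ring
    _ = T' 0 - T' 0 := by rw [← h]
    _ = 0 := sub_self _

private lemma cs_Tneg (hT : IsCondExp T' L1') (a : E') : T' (-a) = -T' a := by
  have h := hT.addT a (-a)
  rw [add_neg_cancel, cs_T0 hT] at h
  exact (neg_eq_of_add_eq_zero_right h.symm).symm

/-- |f|² = f² -/
private lemma cs_abs_sq (hT : IsCondExp T' L1') (f : E') : |f| * |f| = f * f := by
  haveI := csALM hT.addLe; haveI := csARM hT.addLe
  have h1 := posPart_add_negPart f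
  have h2 := posPart_sub_negPart f
  have h3 := cs_pn hT f
  have h4 : (f⁺ + f⁻) * (f⁺ + f⁻) = (f⁺ - f⁻) * (f⁺ - f⁻) + 4 * (f⁺ * f⁻) := by ring
  rw [h1, h2, h3] at h4
  rw [h4]; ring

/-- the fundamental quadratic inequality:
`0 ≤ T(g²) * ( T(g²)·T(f²) − (T|fg|)² )`. -/
private lemma cs_quad (hT : IsCondExp T' L1') (f g : E') :
    0 ≤ T' (g * g) * (T' (g * g) * T' (f * f) - T' |f * g| * T' |f * g|) := by
  haveI := csALM hT.addLe; haveI := csARM hT.addLe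
  have hexp : (T' (g * g) * |f| - T' |f * g| * |g|) * (T' (g * g) * |f| - T' |f * g| * |g|) =
      T' (T' (g * g) * (g * g)) * (f * f) +
        (-(T' (T' (g * g) * |f * g|) * |f * g|) +
          (-(T' (T' (g * g) * |f * g|) * |f * g|) +
            T' (T' |f * g| * |f * g|) * (g * g))) := by
    rw [hT.avgT, hT.avgT, hT.avgT, cs_abs_mul hT f g]
    linear_combination (T' (g * g) * T' (g * g)) * cs_abs_sq hT f +
      (T' (|f| * |g|) * T' (|f| * |g|)) * cs_abs_sq hT g
  have hpos : 0 ≤ T' ((T' (g * g) * |f| - T' |f * g| * |g|) *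
      (T' (g * g) * |f| - T' |f * g| * |g|)) := hT.posT _ (cs_sq hT _)
  rw [hexp] at hpos
  rw [hT.addT, hT.addT, hT.addT] at hpos
  have e0 : T' (-(T' (T' (g * g) * |f * g|) * |f * g|))
      = -(T' (g * g) * T' |f * g| * T' |f * g|) := by
    rw [cs_Tneg hT, hT.avgT, hT.avgT]
  have e2 : T' (T' (T' (g * g) * (g * g)) * (f * f))
      = T' (g * g) * T' (g * g) * T' (f * f) := by
    rw [hT.avgT, hT.avgT]
  have e3 : T' (T' (T' |f * g| * |f * g|) * (g * g))
      = T' |f * g| * T' |f * g| * T' (g * g) := by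
    rw [hT.avgT, hT.avgT]
  rw [e0, e2, e3] at hpos
  exact hpos.trans_eq (by ring)

/-- the core algebraic Cauchy–Schwarz argument -/
private lemma cs_main (hT : IsCondExp T' L1') {c d m : E'} (hc : 0 ≤ c) (hd : 0 ≤ d)
    (hm : 0 ≤ m) (q1 : 0 ≤ d * (d * c - m * m)) (q2 : 0 ≤ c * (c * d - m * m))
    (hamgm : m + m ≤ c + d) : m * m ≤ c * d := by
  haveI := csALM hT.addLe; haveI := csARM hT.addLe
  have hsum : (c + d) * (m * m - c * d) ≤ 0 := by
    calc (c + d) * (m * m - c * d)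
        = -(d * (d * c - m * m)) + -(c * (c * d - m * m)) := by ring
      _ ≤ 0 := add_nonpos (neg_nonpos.2 q1) (neg_nonpos.2 q2)
  have hs0 : 0 ≤ (m * m - c * d)⁺ := posPart_nonneg _
  have hst : (m * m - c * d)⁺ * (m * m - c * d)⁻ = 0 := cs_pn hT _
  have hsub : (m * m - c * d)⁺ - (m * m - c * d)⁻ = m * m - c * d := posPart_sub_negPart _
  have hss : (m * m - c * d)⁺ * (m * m - c * d) = (m * m - c * d)⁺ * (m * m - c * d)⁺ := by
    have e : (m * m - c * d)⁺ * ((m * m - c * d)⁺ - (m * m - c * d)⁻)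
        = (m * m - c * d)⁺ * (m * m - c * d) := by rw [hsub]
    rw [mul_sub, hst, sub_zero] at e
    exact e.symm
  have hcds : (c + d) * ((m * m - c * d)⁺ * (m * m - c * d)⁺) = 0 := by
    refine le_antisymm ?_ (hT.mulPos _ _ (add_nonneg hc hd) (hT.mulPos _ _ hs0 hs0))
    have h1 : 0 ≤ (m * m - c * d)⁺ * -((c + d) * (m * m - c * d)) :=
      hT.mulPos _ _ hs0 (neg_nonneg.2 hsum)
    have h2 : (c + d) * ((m * m - c * d)⁺ * (m * m - c * d)⁺)
        = -((m * m - c * d)⁺ * -((c + d) * (m * m - c * d))) := by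
      rw [← hss]; ring
    rw [h2]
    simpa using neg_nonpos.2 h1
  have hsle : (m * m - c * d)⁺ ≤ m * m := by
    calc (m * m - c * d)⁺ ≤ (m * m)⁺ := posPart_mono (sub_le_self _ (hT.mulPos _ _ hc hd))
      _ = m * m := posPart_eq_self.2 (hT.mulPos _ _ hm hm)
  have h4m : (m + m) * (m + m) ≤ (c + d) * (c + d) := by
    calc (m + m) * (m + m) ≤ (m + m) * (c + d) := cs_mul_le hT (add_nonneg hm hm) hamgm
      _ = (c + d) * (m + m) := by ring
      _ ≤ (c + d) * (c + d) := cs_mul_le hT (add_nonneg hc hd) hamgm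
  have h4s : (m * m - c * d)⁺ + (m * m - c * d)⁺ + (m * m - c * d)⁺ + (m * m - c * d)⁺
      ≤ (c + d) * (c + d) := by
    calc (m * m - c * d)⁺ + (m * m - c * d)⁺ + (m * m - c * d)⁺ + (m * m - c * d)⁺
        ≤ m * m + (m * m) + (m * m) + (m * m) :=
          add_le_add (add_le_add (add_le_add hsle hsle) hsle) hsle
      _ = (m + m) * (m + m) := by ring
      _ ≤ (c + d) * (c + d) := h4m
  have hfin : (m * m - c * d)⁺ * (m * m - c * d)⁺ *
      ((m * m - c * d)⁺ + (m * m - c * d)⁺ + (m * m - c * d)⁺ + (m * m - c * d)⁺) ≤ 0 := by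
    calc (m * m - c * d)⁺ * (m * m - c * d)⁺ *
        ((m * m - c * d)⁺ + (m * m - c * d)⁺ + (m * m - c * d)⁺ + (m * m - c * d)⁺)
        ≤ (m * m - c * d)⁺ * (m * m - c * d)⁺ * ((c + d) * (c + d)) :=
          cs_mul_le hT (hT.mulPos _ _ hs0 hs0) h4s
      _ = (c + d) * ((c + d) * ((m * m - c * d)⁺ * (m * m - c * d)⁺)) := by ring
      _ = 0 := by rw [hcds, mul_zero]
  have h0 : 0 ≤ (m * m - c * d)⁺ * (m * m - c * d)⁺ * (m * m - c * d)⁺ :=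
    hT.mulPos _ _ (hT.mulPos _ _ hs0 hs0) hs0
  have hs3 : (m * m - c * d)⁺ * (m * m - c * d)⁺ * (m * m - c * d)⁺ = 0 := by
    refine le_antisymm ?_ h0
    calc (m * m - c * d)⁺ * (m * m - c * d)⁺ * (m * m - c * d)⁺
        ≤ (m * m - c * d)⁺ * (m * m - c * d)⁺ * (m * m - c * d)⁺ +
          ((m * m - c * d)⁺ * (m * m - c * d)⁺ * (m * m - c * d)⁺ +
            ((m * m - c * d)⁺ * (m * m - c * d)⁺ * (m * m - c * d)⁺ +
              (m * m - c * d)⁺ * (m * m - c * d)⁺ * (m * m - c * d)⁺)) :=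
          le_add_of_nonneg_right (add_nonneg h0 (add_nonneg h0 h0))
      _ = (m * m - c * d)⁺ * (m * m - c * d)⁺ *
          ((m * m - c * d)⁺ + (m * m - c * d)⁺ + (m * m - c * d)⁺ + (m * m - c * d)⁺) := by
          ring
      _ ≤ 0 := hfin
  exact sub_nonpos.1 (posPart_eq_zero.1 (cs_cubezero hT hs0 hs3))

end CSAux

/-- The Hölder-type inequality
`T|fg| ≤ ‖f‖_{T,2} ‖g‖_{T,2}` for `f, g ∈ L²(T)`. -/
theorem stmt2 (T : E → E) (L1 : Set E) (hT : IsCondExp T L1)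
    (sqrt : E → E) (hsqrt : IsSqrt sqrt)
    (f g : E) (hf : f ∈ L2 L1) (hg : g ∈ L2 L1) :
    T |f * g| ≤ nrm T sqrt f * nrm T sqrt g := by
  haveI := csALM hT.addLe; haveI := csARM hT.addLe
  have hc : 0 ≤ T (f * f) := hT.posT _ (cs_sq hT f)
  have hd : 0 ≤ T (g * g) := hT.posT _ (cs_sq hT g)
  have hm : 0 ≤ T |f * g| := hT.posT _ (abs_nonneg _)
  have q1 := cs_quad hT f g
  have q2 := cs_quad hT g f
  rw [mul_comm g f] at q2
  have hamgm : T |f * g| + T |f * g| ≤ T (f * f) + T (g * g) := by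
    have h1 : 0 ≤ (|f| - |g|) * (|f| - |g|) := cs_sq hT _
    have h2 : (|f| - |g|) * (|f| - |g|) = f * f + (g * g + (-|f * g| + -|f * g|)) := by
      rw [cs_abs_mul hT f g]
      linear_combination cs_abs_sq hT f + cs_abs_sq hT g
    rw [h2] at h1
    have h3 := hT.posT _ h1
    simp only [hT.addT, cs_Tneg hT] at h3
    have h4 := add_le_add h3 (le_refl (T |f * g| + T |f * g|))
    calc T |f * g| + T |f * g| = 0 + (T |f * g| + T |f * g|) := by ring
      _ ≤ T (f * f) + (T (g * g) + (-T |f * g| + -T |f * g|)) + (T |f * g| + T |f * g|) := h4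
      _ = T (f * f) + T (g * g) := by ring
  have hkey : T |f * g| * T |f * g| ≤ T (f * f) * T (g * g) :=
    cs_main hT hc hd hm q1 q2 hamgm
  obtain ⟨ha0, ha2⟩ := hsqrt _ hc
  obtain ⟨hb0, hb2⟩ := hsqrt _ hd
  have hsq : T |f * g| * T |f * g| ≤
      (sqrt (T (f * f)) * sqrt (T (g * g))) * (sqrt (T (f * f)) * sqrt (T (g * g))) := by
    calc T |f * g| * T |f * g| ≤ T (f * f) * T (g * g) := hkey
      _ = (sqrt (T (f * f)) * sqrt (T (g * g))) * (sqrt (T (f * f)) * sqrt (T (g * g))) := by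
        linear_combination (-(T (g * g))) * ha2 +
          (-(sqrt (T (f * f)) * sqrt (T (f * f)))) * hb2
  show T |f * g| ≤ sqrt (T (f * f)) * sqrt (T (g * g))
  exact cs_sqle hT hm (hT.mulPos _ _ ha0 hb0) hsq
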